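/- (Structure of LR bias in the treatment allocation, homogeneous market.) Let λ > 0 and 0 ≤ φ < φ̃. Define B_LR(a) = exp(−λ·φ·F(aφ̃ + (1−a)φ)) − exp(−λ·φ̃·F(aφ̃ + (1−a)φ)) for a ∈ [0,1] (GTE is constant in a, so this determines the bias up to an additive constant). Then the derivative dB_LR/da(a) is positive if and only if φ̃/φ < exp(λ·(φ̃ − φ)·F(aφ̃ + (1−a)φ)) (for φ > 0), and B_LR has at most one local maximum and no local minimum in the interior of (0,1); hence B_LR attains its infimum on [0,1] at a = 0 or a = 1. -/

import Mathlib

noncomputable def F : ℝ → ℝ := fun x => if x = 0 then 1 else (1 - Real.exp (-x)) / x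

noncomputable def BLR (lam φ φt : ℝ) : ℝ → ℝ := fun a =>
  Real.exp (-(lam * φ * F (a * φt + (1 - a) * φ)))
    - Real.exp (-(lam * φt * F (a * φt + (1 - a) * φ)))

noncomputable def Fd (x : ℝ) : ℝ := (Real.exp (-x) * (x + 1) - 1) / x ^ 2

lemma hasDerivAt_F {x : ℝ} (hx : 0 < x) : HasDerivAt F (Fd x) x := by
  have h1 : HasDerivAt (fun y : ℝ => (1 - Real.exp (-y)) / y)
      ((Real.exp (-x) * 1 * x - (1 - Real.exp (-x)) * 1) / x ^ 2) x := by
    have hnum : HasDerivAt (fun y : ℝ => 1 - Real.exp (-y)) (Real.exp (-x) * 1) x := by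
      have := ((hasDerivAt_id x).neg).exp
      exact ((hasDerivAt_const x (1:ℝ)).sub this).congr_deriv (by simp)
    exact hnum.div (hasDerivAt_id x) hx.ne'
  have heq : F =ᶠ[nhds x] (fun y : ℝ => (1 - Real.exp (-y)) / y) := by
    filter_upwards [eventually_gt_nhds hx] with y hy
    simp [F, hy.ne']
  have h2 := h1.congr_of_eventuallyEq heq
  refine h2.congr_deriv ?_
  unfold Fd
  field_simp
  ring

lemma Fd_neg {x : ℝ} (hx : 0 < x) : Fd x < 0 := by
  have h1 : x + 1 < Real.exp x := by
    have := Real.add_one_lt_exp (ne_of_gt hx)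
    linarith
  have h2 : Real.exp (-x) * Real.exp x = 1 := by
    rw [← Real.exp_add]; simp
  have h3 : Real.exp (-x) * (x + 1) - 1 < 0 := by
    nlinarith [Real.exp_pos (-x)]
  exact div_neg_of_neg_of_pos h3 (by positivity)

lemma sign_aux (lam φ φt : ℝ) (hφ : 0 < φ) (x : ℝ) :
    (φt / φ < Real.exp (lam * (φt - φ) * F x) ↔
      φt * Real.exp (-(lam * φt * F x)) < φ * Real.exp (-(lam * φ * F x))) := by
  rw [show lam * (φt - φ) * F x = (-(lam * φ * F x)) - (-(lam * φt * F x)) by ring,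
    Real.exp_sub, div_lt_div_iff₀ hφ (Real.exp_pos _)]
  constructor <;> intro h <;> linarith

lemma sign_aux' (lam φ φt : ℝ) (hφ : 0 < φ) (x : ℝ) :
    (Real.exp (lam * (φt - φ) * F x) < φt / φ ↔
      φ * Real.exp (-(lam * φ * F x)) < φt * Real.exp (-(lam * φt * F x))) := by
  rw [show lam * (φt - φ) * F x = (-(lam * φ * F x)) - (-(lam * φt * F x)) by ring,
    Real.exp_sub, div_lt_div_iff₀ (Real.exp_pos _) hφ]
  constructor <;> intro h <;> linarith

lemma sign_pos_iff (lam φ φt : ℝ) (hlam : 0 < lam) (hφ : 0 < φ) (hlt : φ < φt)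
    {x : ℝ} (hx : 0 < x) :
    (0 < lam * (φt - φ) * (-Fd x) *
        (φ * Real.exp (-(lam * φ * F x)) - φt * Real.exp (-(lam * φt * F x))) ↔
      φt / φ < Real.exp (lam * (φt - φ) * F x)) := by
  have hK : 0 < lam * (φt - φ) * (-Fd x) :=
    mul_pos (mul_pos hlam (by linarith)) (neg_pos.mpr (Fd_neg hx))
  rw [mul_pos_iff_of_pos_left hK, sub_pos, sign_aux lam φ φt hφ x]

lemma sign_neg_iff (lam φ φt : ℝ) (hlam : 0 < lam) (hφ : 0 < φ) (hlt : φ < φt)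
    {x : ℝ} (hx : 0 < x) :
    (lam * (φt - φ) * (-Fd x) *
        (φ * Real.exp (-(lam * φ * F x)) - φt * Real.exp (-(lam * φt * F x))) < 0 ↔
      Real.exp (lam * (φt - φ) * F x) < φt / φ) := by
  have hK : 0 < lam * (φt - φ) * (-Fd x) :=
    mul_pos (mul_pos hlam (by linarith)) (neg_pos.mpr (Fd_neg hx))
  constructor
  · intro h
    rcases mul_neg_iff.mp h with ⟨_, hf⟩ | ⟨hK', _⟩
    · exact (sign_aux' lam φ φt hφ x).mpr (by linarith [sub_neg.mp hf])
    · linarith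
  · intro h
    exact mul_neg_iff.mpr (Or.inl ⟨hK, sub_neg.mpr ((sign_aux' lam φ φt hφ x).mp h)⟩)

lemma hasDerivAt_u (φ φt : ℝ) {a : ℝ} (hx : 0 < a * φt + (1 - a) * φ) :
    HasDerivAt (fun b : ℝ => F (b * φt + (1 - b) * φ))
      (Fd (a * φt + (1 - a) * φ) * (φt - φ)) a := by
  have hin : HasDerivAt (fun b : ℝ => b * φt + (1 - b) * φ) (φt - φ) a := by
    have := ((hasDerivAt_id a).mul_const φt).add
      (((hasDerivAt_const a (1:ℝ)).sub (hasDerivAt_id a)).mul_const φ)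
    exact this.congr_deriv (by ring)
  exact (hasDerivAt_F hx).comp a hin

lemma hasDerivAt_B (lam φ φt : ℝ) {a : ℝ} (hx : 0 < a * φt + (1 - a) * φ) :
    HasDerivAt (BLR lam φ φt)
      (lam * (φt - φ) * (-Fd (a * φt + (1 - a) * φ)) *
        (φ * Real.exp (-(lam * φ * F (a * φt + (1 - a) * φ)))
          - φt * Real.exp (-(lam * φt * F (a * φt + (1 - a) * φ))))) a := by
  have hu := hasDerivAt_u φ φt hx
  have h1 := (((hu.const_mul (lam * φ)).neg).exp)
  have h2 := (((hu.const_mul (lam * φt)).neg).exp)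
  have h3 := h1.sub h2
  refine h3.congr_deriv ?_
  simp only [Pi.neg_apply]
  ring

lemma key (lam φ φt : ℝ) (hlam : 0 < lam) (hφ : 0 < φ) (hlt : φ < φt) :
    ∃ c ∈ Set.Icc (0:ℝ) 1, StrictMonoOn (BLR lam φ φt) (Set.Icc 0 c) ∧
      StrictAntiOn (BLR lam φ φt) (Set.Icc c 1) := by
  set E : ℝ → ℝ := fun a => Real.exp (lam * (φt - φ) * F (a * φt + (1 - a) * φ)) with hE
  have hxpos : ∀ a ∈ Set.Icc (0:ℝ) 1, 0 < a * φt + (1 - a) * φ := by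
    rintro a ⟨h0, h1⟩; nlinarith
  -- continuity of BLR on [0,1]
  have hBc : ContinuousOn (BLR lam φ φt) (Set.Icc 0 1) := fun a ha =>
    ((hasDerivAt_B lam φ φt (hxpos a ha)).continuousAt).continuousWithinAt
  -- u strictly anti on [0,1]
  have hu_anti : StrictAntiOn (fun a : ℝ => F (a * φt + (1 - a) * φ)) (Set.Icc 0 1) := by
    apply strictAntiOn_of_deriv_neg (convex_Icc 0 1)
    · exact fun a ha => ((hasDerivAt_u φ φt (hxpos a ha)).continuousAt).continuousWithinAt
    · intro a ha
      rw [interior_Icc] at ha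
      rw [(hasDerivAt_u φ φt (hxpos a (Set.Ioo_subset_Icc_self ha))).deriv]
      exact mul_neg_of_neg_of_pos (Fd_neg (hxpos a (Set.Ioo_subset_Icc_self ha))) (by linarith)
  have hE_anti : StrictAntiOn E (Set.Icc 0 1) := by
    intro a ha b hb hab
    exact Real.exp_lt_exp.mpr (mul_lt_mul_of_pos_left (hu_anti ha hb hab)
      (by nlinarith : (0:ℝ) < lam * (φt - φ)))
  have hE_cont : ContinuousOn E (Set.Icc 0 1) := by
    apply Real.continuous_exp.comp_continuousOn
    exact (continuousOn_const.mul (fun a ha =>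
      ((hasDerivAt_u φ φt (hxpos a ha)).continuousAt).continuousWithinAt))
  -- derivative sign transferred
  have hdpos : ∀ a ∈ Set.Icc (0:ℝ) 1, φt / φ < E a → 0 < deriv (BLR lam φ φt) a := by
    intro a ha h
    rw [(hasDerivAt_B lam φ φt (hxpos a ha)).deriv]
    exact (sign_pos_iff lam φ φt hlam hφ hlt (hxpos a ha)).mpr h
  have hdneg : ∀ a ∈ Set.Icc (0:ℝ) 1, E a < φt / φ → deriv (BLR lam φ φt) a < 0 := by
    intro a ha h
    rw [(hasDerivAt_B lam φ φt (hxpos a ha)).deriv]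
    exact (sign_neg_iff lam φ φt hlam hφ hlt (hxpos a ha)).mpr h
  -- monotone-on-a-subinterval builders
  have mono_of : ∀ c ∈ Set.Icc (0:ℝ) 1, (∀ a ∈ Set.Ioo (0:ℝ) c, φt / φ < E a) →
      StrictMonoOn (BLR lam φ φt) (Set.Icc 0 c) := by
    intro c hc h
    apply strictMonoOn_of_deriv_pos (convex_Icc 0 c)
      (hBc.mono (Set.Icc_subset_Icc le_rfl hc.2))
    intro a ha
    rw [interior_Icc] at ha
    exact hdpos a ⟨ha.1.le, ha.2.le.trans hc.2⟩ (h a ha)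
  have anti_of : ∀ c ∈ Set.Icc (0:ℝ) 1, (∀ a ∈ Set.Ioo c 1, E a < φt / φ) →
      StrictAntiOn (BLR lam φ φt) (Set.Icc c 1) := by
    intro c hc h
    apply strictAntiOn_of_deriv_neg (convex_Icc c 1)
      (hBc.mono (Set.Icc_subset_Icc hc.1 le_rfl))
    intro a ha
    rw [interior_Icc] at ha
    exact hdneg a ⟨hc.1.trans ha.1.le, ha.2.le⟩ (h a ha)
  have h01 : (0:ℝ) ∈ Set.Icc (0:ℝ) 1 := by constructor <;> norm_num
  have h11 : (1:ℝ) ∈ Set.Icc (0:ℝ) 1 := by constructor <;> norm_num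
  rcases le_or_gt (φt / φ) (E 1) with hcase1 | hcase1
  · refine ⟨1, h11, mono_of 1 h11 ?_, ?_⟩
    · intro a ha
      exact lt_of_le_of_lt hcase1 (hE_anti ⟨ha.1.le, ha.2.le⟩ h11 ha.2)
    · intro a ha b hb hab
      have : a = 1 := le_antisymm ha.2 ha.1
      have : b = 1 := le_antisymm hb.2 hb.1
      simp_all
  rcases le_or_gt (E 0) (φt / φ) with hcase2 | hcase2
  · refine ⟨0, h01, ?_, anti_of 0 h01 ?_⟩
    · intro a ha b hb hab
      have : a = 0 := le_antisymm ha.2 ha.1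
      have : b = 0 := le_antisymm hb.2 hb.1
      simp_all
    · intro a ha
      exact lt_of_lt_of_le (hE_anti h01 ⟨ha.1.le, ha.2.le⟩ ha.1) hcase2
  · have := intermediate_value_Ioo' (le_of_lt one_pos) hE_cont (a := 0) (b := 1)
    obtain ⟨c, hc, hEc⟩ := this ⟨hcase1, hcase2⟩
    have hc' : c ∈ Set.Icc (0:ℝ) 1 := ⟨hc.1.le, hc.2.le⟩
    refine ⟨c, hc', mono_of c hc' ?_, anti_of c hc' ?_⟩
    · intro a ha
      rw [← hEc]
      exact hE_anti ⟨ha.1.le, (ha.2.le.trans hc'.2)⟩ hc' ha.2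
    · intro a ha
      rw [← hEc]
      exact hE_anti hc' ⟨hc'.1.trans ha.1.le, ha.2.le⟩ ha.1

theorem stmt_8 (lam φ φt : ℝ) (hlam : 0 < lam) (hφ : 0 < φ) (hlt : φ < φt) :
    (∀ a ∈ Set.Ioo (0:ℝ) 1,
      (0 < deriv (BLR lam φ φt) a ↔
        φt / φ < Real.exp (lam * (φt - φ) * F (a * φt + (1 - a) * φ)))) ∧
    (∀ a ∈ Set.Ioo (0:ℝ) 1, ¬ IsLocalMin (BLR lam φ φt) a) ∧
    (∀ a ∈ Set.Ioo (0:ℝ) 1, ∀ b ∈ Set.Ioo (0:ℝ) 1,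
      IsLocalMax (BLR lam φ φt) a → IsLocalMax (BLR lam φ φt) b → a = b) ∧
    (∀ a ∈ Set.Icc (0:ℝ) 1,
      min (BLR lam φ φt 0) (BLR lam φ φt 1) ≤ BLR lam φ φt a) := by
  have hxpos : ∀ a ∈ Set.Icc (0:ℝ) 1, 0 < a * φt + (1 - a) * φ := by
    rintro a ⟨h0, h1⟩; nlinarith
  set B := BLR lam φ φt with hB
  obtain ⟨c, hc, hmono, hanti⟩ := key lam φ φt hlam hφ hlt
  refine ⟨?_, ?_, ?_, ?_⟩
  · -- part 1: derivative sign iff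
    intro a ha
    have hx := hxpos a ⟨ha.1.le, ha.2.le⟩
    rw [(hasDerivAt_B lam φ φt hx).deriv]
    exact sign_pos_iff lam φ φt hlam hφ hlt hx
  · -- part 2: no local min
    intro a ha hmin
    rcases le_or_gt a c with hac | hac
    · -- points just left of a have smaller value
      have h1 : ∀ᶠ y in nhdsWithin a (Set.Iio a), B a ≤ B y := hmin.filter_mono nhdsWithin_le_nhds
      have h2 : Set.Ioo 0 a ∈ nhdsWithin a (Set.Iio a) :=
        Ioo_mem_nhdsLT_of_mem ⟨ha.1, le_rfl⟩
      obtain ⟨y, hy1, hy2⟩ := (h1.and (Filter.eventually_of_mem h2 (fun y hy => hy))).exists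
      have : B y < B a := hmono ⟨hy2.1.le, hy2.2.le.trans hac⟩ ⟨ha.1.le, hac⟩ hy2.2
      linarith
    · have h1 : ∀ᶠ y in nhdsWithin a (Set.Ioi a), B a ≤ B y := hmin.filter_mono nhdsWithin_le_nhds
      have h2 : Set.Ioo a 1 ∈ nhdsWithin a (Set.Ioi a) :=
        Ioo_mem_nhdsGT_of_mem ⟨le_rfl, ha.2⟩
      obtain ⟨y, hy1, hy2⟩ := (h1.and (Filter.eventually_of_mem h2 (fun y hy => hy))).exists
      have : B y < B a := hanti ⟨hac.le, ha.2.le⟩ ⟨hac.le.trans hy2.1.le, hy2.2.le⟩ hy2.1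
      linarith
  · -- part 3: at most one local max
    have claim : ∀ a ∈ Set.Ioo (0:ℝ) 1, IsLocalMax B a → a = c := by
      intro a ha hmax
      rcases lt_trichotomy a c with h | h | h
      · exfalso
        have h1 : ∀ᶠ y in nhdsWithin a (Set.Ioi a), B y ≤ B a := hmax.filter_mono nhdsWithin_le_nhds
        have h2 : Set.Ioo a c ∈ nhdsWithin a (Set.Ioi a) :=
          Ioo_mem_nhdsGT_of_mem ⟨le_rfl, h⟩
        obtain ⟨y, hy1, hy2⟩ := (h1.and (Filter.eventually_of_mem h2 (fun y hy => hy))).exists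
        have : B a < B y := hmono ⟨ha.1.le, h.le⟩ ⟨ha.1.le.trans hy2.1.le, hy2.2.le⟩ hy2.1
        linarith
      · exact h
      · exfalso
        have h1 : ∀ᶠ y in nhdsWithin a (Set.Iio a), B y ≤ B a := hmax.filter_mono nhdsWithin_le_nhds
        have h2 : Set.Ioo c a ∈ nhdsWithin a (Set.Iio a) :=
          Ioo_mem_nhdsLT_of_mem ⟨h, le_rfl⟩
        obtain ⟨y, hy1, hy2⟩ := (h1.and (Filter.eventually_of_mem h2 (fun y hy => hy))).exists
        have : B a < B y := hanti ⟨hy2.1.le, hy2.2.le.trans ha.2.le⟩ ⟨h.le, ha.2.le⟩ hy2.2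
        linarith
    intro a ha b hb hma hmb
    rw [claim a ha hma, claim b hb hmb]
  · -- part 4: min at endpoints
    intro a ha
    rcases le_or_gt a c with hac | hac
    · rcases eq_or_lt_of_le ha.1 with h0 | h0
      · rw [← h0]; exact min_le_left _ _
      · have : B 0 < B a := hmono ⟨le_rfl, hc.1⟩ ⟨ha.1, hac⟩ h0
        exact le_trans (min_le_left _ _) this.le
    · rcases eq_or_lt_of_le ha.2 with h1 | h1
      · rw [h1]; exact min_le_right _ _
      · have : B 1 < B a := hanti ⟨hac.le, ha.2⟩ ⟨hc.2, le_rfl⟩ h1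
        exact le_trans (min_le_right _ _) this.le
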